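/- Let H be a simply connected combinatorial strata structure endowed with a datum (N, {P_J}) of nodal strata, with nodal separating blocks enumerated B₁, …, B_n and maps Φ_m as defined. Then for every 0 ≤ m ≤ n, the 1-connected components of H(1) in H_m = H \ Cl_H(B₁ ∪ … ∪ B_m) are exactly the fibers Φ_m^{-1}(c) for c ∈ Δ_m. -/

import Mathlib

/-- A combinatorial strata structure with minimal set of indices the (finite) type `I`:
an open subset of `𝒫(I)` (i.e. a family closed under taking subsets) containing all
singletons. -/
def IsCSS {I : Type*} (H : Set (Finset I)) : Prop :=
  (∀ J ∈ H, ∀ J' : Finset I, J' ⊆ J → J' ∈ H) ∧ ∀ i : I, ({i} : Finset I) ∈ H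

/-- `level H k` is `H(k)`, the set of strata of `H` with exactly `k` elements. -/
def level {I : Type*} (H : Set (Finset I)) (k : ℕ) : Set (Finset I) :=
  {J ∈ H | J.card = k}

/-- A `k`-path in `H`: a nonempty sequence of strata of `H(k)` such that the union of
any two consecutive entries lies in `H(k+1)`. -/
def IsKPath {I : Type*} [DecidableEq I] (H : Set (Finset I)) (k : ℕ)
    (γ : List (Finset I)) : Prop :=
  γ ≠ [] ∧ (∀ J ∈ γ, J ∈ level H k) ∧
    γ.Chain' fun J J' => (J ∪ J') ∈ level H (k + 1)

/-- The path `γ` joins `J` and `J'`. -/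
def Joins {I : Type*} (γ : List (Finset I)) (J J' : Finset I) : Prop :=
  γ.head? = some J ∧ γ.getLast? = some J'

/-- The subsupport of a path: the sequence of unions of consecutive entries. -/
def subSup {I : Type*} [DecidableEq I] (γ : List (Finset I)) : List (Finset I) :=
  List.zipWith (· ∪ ·) γ γ.tail

open Classical in
/-- `kappa B γ`: the number of entries of the subsupport of `γ` that belong to `B`. -/
noncomputable def kappa {I : Type*} [DecidableEq I] (B : Set (Finset I))
    (γ : List (Finset I)) : ℕ :=
  (subSup γ).countP fun J => decide (J ∈ B)

/-- `A` is `k`-connected in `H`: any two elements of `A` are joined by a `k`-path in `H`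
with support contained in `A`. -/
def KConnectedIn {I : Type*} [DecidableEq I] (H : Set (Finset I)) (k : ℕ)
    (A : Set (Finset I)) : Prop :=
  ∀ J ∈ A, ∀ J' ∈ A, ∃ γ : List (Finset I),
    IsKPath H k γ ∧ Joins γ J J' ∧ ∀ K ∈ γ, K ∈ A

/-- `C` is a `k`-connected component of `A` in `H`: a maximal nonempty `k`-connected
subset of `A`. -/
def IsKComponent {I : Type*} [DecidableEq I] (H : Set (Finset I)) (k : ℕ)
    (A C : Set (Finset I)) : Prop :=
  C.Nonempty ∧ C ⊆ A ∧ KConnectedIn H k C ∧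
    ∀ C' : Set (Finset I), C ⊆ C' → C' ⊆ A → KConnectedIn H k C' → C' = C

/-- `H` is 1-connected: `H(1)` is 1-connected in `H`. -/
def OneConnected {I : Type*} [DecidableEq I] (H : Set (Finset I)) : Prop :=
  KConnectedIn H 1 (level H 1)

/-- One-sided version of an elementary homotopic pair of 1-paths in `H`. -/
def ElemPairCore {I : Type*} [DecidableEq I] (H : Set (Finset I))
    (ε ε' : List (Finset I)) : Prop :=
  ε = ε'
  ∨ (∃ i₁ i₂ : I, ε = [{i₁}, {i₂}, {i₁}] ∧ ε' = [{i₁}])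
  ∨ (∃ i₁ i₂ i₃ : I, ε = [{i₁}, {i₂}] ∧ ε' = [{i₁}, {i₃}, {i₂}] ∧
      IsKPath H 2 [{i₁, i₃}, {i₃, i₂}])

/-- An elementary homotopic pair of 1-paths in `H` (up to swapping the two paths). -/
def ElemPair {I : Type*} [DecidableEq I] (H : Set (Finset I))
    (ε ε' : List (Finset I)) : Prop :=
  ElemPairCore H ε ε' ∨ ElemPairCore H ε' ε

/-- `γ₂` is obtained from `γ₁` by an elementary homotopy. -/
def ElemHomotopy {I : Type*} [DecidableEq I] (H : Set (Finset I))
    (γ₁ γ₂ : List (Finset I)) : Prop :=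
  ∃ δ ε₁ ε₂ ρ : List (Finset I),
    ElemPair H ε₁ ε₂ ∧ γ₁ = δ ++ ε₁ ++ ρ ∧ γ₂ = δ ++ ε₂ ++ ρ

/-- `γ` and `γ'` are homotopically equivalent in `H` with support in `A`: they are linked
by a finite chain of elementary homotopies in which every intermediate 1-path has
support in `A`. -/
def HomotopicIn {I : Type*} [DecidableEq I] (H A : Set (Finset I))
    (γ γ' : List (Finset I)) : Prop :=
  (IsKPath H 1 γ ∧ ∀ J ∈ γ, J ∈ A) ∧
    Relation.ReflTransGen
      (fun g₁ g₂ => ElemHomotopy H g₁ g₂ ∧ IsKPath H 1 g₂ ∧ ∀ J ∈ g₂, J ∈ A) γ γ'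

/-- A 1-connected subset `A ⊆ H(1)` is simply connected in `H`: any two 1-paths in `H`
with support in `A` joining the same strata are homotopically equivalent in `H` with
support in `A`. -/
def SimplyConnectedIn {I : Type*} [DecidableEq I] (H A : Set (Finset I)) : Prop :=
  KConnectedIn H 1 A ∧
    ∀ γ γ' : List (Finset I), IsKPath H 1 γ → IsKPath H 1 γ' →
      (∀ J ∈ γ, J ∈ A) → (∀ J ∈ γ', J ∈ A) →
      γ.head? = γ'.head? → γ.getLast? = γ'.getLast? →
      HomotopicIn H A γ γ'

/-- `H` is simply connected: `H(1)` is simply connected in `H`. -/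
def SimplyConnected {I : Type*} [DecidableEq I] (H : Set (Finset I)) : Prop :=
  SimplyConnectedIn H (level H 1)

/-- The closure of `A` in `H`: the strata of `H` containing some element of `A`. -/
def Cl {I : Type*} (H A : Set (Finset I)) : Set (Finset I) :=
  {J' ∈ H | ∃ J ∈ A, J ⊆ J'}

/-- A datum of nodal strata `(N, {P_J})` in `H`: a subset `N ⊆ H` together with, for each
`J ∈ N`, a partition `P_J = {J₊, J₋}` of `J` into two nonempty parts, such that for every
`J ∈ N` and `J' ⊆ J` one has `J' ∈ N` iff `J' ∩ J₊ ≠ ∅ ≠ J' ∩ J₋`, and in that case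
`P_{J'} = {J' ∩ J₊, J' ∩ J₋}`. -/
structure NodalDatum {I : Type*} [DecidableEq I] (H : Set (Finset I)) : Type _ where
  N : Set (Finset I)
  N_sub : N ⊆ H
  plus : Finset I → Finset I
  minus : Finset I → Finset I
  plus_nonempty : ∀ J ∈ N, (plus J).Nonempty
  minus_nonempty : ∀ J ∈ N, (minus J).Nonempty
  union_eq : ∀ J ∈ N, plus J ∪ minus J = J
  disj : ∀ J ∈ N, Disjoint (plus J) (minus J)
  mem_iff : ∀ J ∈ N, ∀ J' : Finset I, J' ⊆ J →
    (J' ∈ N ↔ (J' ∩ plus J).Nonempty ∧ (J' ∩ minus J).Nonempty)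
  part_eq : ∀ J ∈ N, ∀ J' : Finset I, J' ⊆ J → J' ∈ N →
    ({plus J', minus J'} : Set (Finset I)) = {J' ∩ plus J, J' ∩ minus J}

/-- `N*`: the set of uninterrupted nodal strata, i.e. `J ∈ N` with `Cl_H({J}) ⊆ N`. -/
def Nstar {I : Type*} [DecidableEq I] {H : Set (Finset I)} (D : NodalDatum H) :
    Set (Finset I) :=
  {J ∈ D.N | ∀ J' ∈ H, J ⊆ J' → J' ∈ D.N}

/-- A nodal block of `N` in `H`: a 2-connected component of `N(2) = N ∩ H(2)` in `H`. -/
def IsNodalBlock {I : Type*} [DecidableEq I] {H : Set (Finset I)} (D : NodalDatum H)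
    (B : Set (Finset I)) : Prop :=
  IsKComponent H 2 (D.N ∩ level H 2) B

/-- A nodal separating block: a nodal block contained in `N*`. -/
def IsSepBlock {I : Type*} [DecidableEq I] {H : Set (Finset I)} (D : NodalDatum H)
    (B : Set (Finset I)) : Prop :=
  IsNodalBlock D B ∧ B ⊆ Nstar D

/-- The separator set: the union of all nodal separating blocks. -/
def SepSet {I : Type*} [DecidableEq I] {H : Set (Finset I)} (D : NodalDatum H) :
    Set (Finset I) :=
  ⋃₀ {B | IsSepBlock D B}

/-- `A_B(i)`: the set of `{j} ∈ H(1)` joined to `{i}` by a 1-path `γ` in `H` with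
`κ_B(γ)` even. -/
def ABset {I : Type*} [DecidableEq I] (H B : Set (Finset I)) (i : I) : Set (Finset I) :=
  {J ∈ level H 1 | ∃ γ : List (Finset I),
    IsKPath H 1 γ ∧ Joins γ {i} J ∧ Even (kappa B γ)}

/-- `B_B(i)`: the set of `{j} ∈ H(1)` joined to `{i}` by a 1-path `γ` in `H` with
`κ_B(γ)` odd. -/
def BBset {I : Type*} [DecidableEq I] (H B : Set (Finset I)) (i : I) : Set (Finset I) :=
  {J ∈ level H 1 | ∃ γ : List (Finset I),
    IsKPath H 1 γ ∧ Joins γ {i} J ∧ Odd (kappa B γ)}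

open Classical in
/-- `Φ_m` for the enumeration `B` of the nodal separating blocks and base point `i₀`,
evaluated on the singleton stratum `{i}` (identified with `i`):
`Φ_m({i})(ℓ) = 0` if `{i} ∈ A_{B_ℓ}(i₀)` and `Φ_m({i})(ℓ) = 1` (`true`) if
`{i} ∈ B_{B_ℓ}(i₀)`. -/
noncomputable def PhiM {I : Type*} [DecidableEq I] {n : ℕ} (H : Set (Finset I)) (i₀ : I)
    (B : Fin n → Set (Finset I)) (m : ℕ) (hm : m ≤ n) (i : I) : Fin m → Bool :=
  fun ℓ => decide (({i} : Finset I) ∈ BBset H (B (Fin.castLE hm ℓ)) i₀)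


section Dev
variable {I : Type*} [DecidableEq I]

lemma subSup_cons_cons (a b : Finset I) (l : List (Finset I)) :
    subSup (a :: b :: l) = (a ∪ b) :: subSup (b :: l) := rfl

lemma subSup_append (α β : List (Finset I)) :
    subSup (α ++ β) =
      subSup α ++ (List.zipWith (· ∪ ·) α.getLast?.toList β.head?.toList) ++ subSup β := by
  induction α with
  | nil => simp [subSup]
  | cons a α ih =>
    cases α with
    | nil =>
      cases β with
      | nil => simp [subSup]
      | cons b β => simp [subSup_cons_cons, subSup]
    | cons a' α' =>
      simp only [List.cons_append] at ih ⊢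
      rw [subSup_cons_cons a a' (α' ++ β), subSup_cons_cons a a' α', ih]
      simp

open Classical in
lemma kappa_append (Bs : Set (Finset I)) (α β : List (Finset I)) :
    kappa Bs (α ++ β) = kappa Bs α +
      (List.zipWith (· ∪ ·) α.getLast?.toList β.head?.toList).countP
        (fun J => decide (J ∈ Bs)) + kappa Bs β := by
  unfold kappa
  rw [subSup_append, List.countP_append, List.countP_append]

end Dev

section WalkDev
variable {I : Type*} [DecidableEq I]

inductive Walk (H : Set (Finset I)) : I → I → Type _ where
  | nil (i : I) : Walk H i i
  | cons {i j k : I} (h : ({i} ∪ {j} : Finset I) ∈ level H 2) (w : Walk H j k) : Walk H i k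

namespace Walk
variable {H : Set (Finset I)}

def toList : ∀ {i j : I}, Walk H i j → List (Finset I)
  | i, _, nil _ => [({i} : Finset I)]
  | _, _, @cons _ _ _ i _ _ _ w => ({i} : Finset I) :: w.toList

open Classical in
noncomputable def kap (Bs : Set (Finset I)) : ∀ {i j : I}, Walk H i j → ℕ
  | _, _, nil _ => 0
  | _, _, @cons _ _ _ i j _ _ w =>
      (if ({i} ∪ {j} : Finset I) ∈ Bs then 1 else 0) + kap Bs w

lemma toList_ne_nil {i j : I} (w : Walk H i j) : w.toList ≠ [] := by
  cases w <;> simp [toList]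

lemma head?_toList {i j : I} (w : Walk H i j) : w.toList.head? = some ({i} : Finset I) := by
  cases w <;> simp [toList]

lemma getLast?_toList {i j : I} (w : Walk H i j) :
    w.toList.getLast? = some ({j} : Finset I) := by
  induction w with
  | nil i => simp [toList]
  | cons h w ih =>
    rw [toList, List.getLast?_cons, ih]
    simp [Option.or, toList_ne_nil w]

lemma joins_toList {i j : I} (w : Walk H i j) : Joins w.toList ({i} : Finset I) {j} :=
  ⟨head?_toList w, getLast?_toList w⟩

lemma isKPath_toList (hsing : ∀ x : I, ({x} : Finset I) ∈ H)
    {i j : I} (w : Walk H i j) : IsKPath H 1 w.toList := by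
  induction w with
  | nil i => exact ⟨by simp [toList], by simp [toList, level, hsing], List.isChain_singleton _⟩
  | cons h w ih =>
    refine ⟨by simp [toList], ?_, ?_⟩
    · intro J hJ
      rw [toList, List.mem_cons] at hJ
      rcases hJ with rfl | hJ
      · exact ⟨hsing _, by simp⟩
      · exact ih.2.1 J hJ
    · rw [toList]
      rw [List.Chain', List.isChain_cons]
      refine ⟨?_, ih.2.2⟩
      intro y hy
      rw [head?_toList w] at hy
      cases hy
      exact h

open Classical in
lemma kap_eq_kappa (Bs : Set (Finset I)) {i j : I} (w : Walk H i j) :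
    w.kap Bs = kappa Bs w.toList := by
  induction w with
  | nil i => simp [kap, toList, kappa, subSup]
  | @cons i j k h w ih =>
    have hl : w.toList = ({j} : Finset I) :: w.toList.tail := by
      have := head?_toList w
      cases hw : w.toList with
      | nil => exact absurd hw (toList_ne_nil w)
      | cons a l => rw [hw] at this; simp at this; simp [this]
    rw [kap, ih, toList]
    conv_lhs => rw [hl]
    conv_rhs => rw [hl]
    rw [kappa, kappa, subSup_cons_cons, List.countP_cons]
    simp only [decide_eq_true_eq]
    omega

def append : ∀ {i j k : I}, Walk H i j → Walk H j k → Walk H i k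
  | _, _, _, nil _, w' => w'
  | _, _, _, cons h w, w' => cons h (w.append w')

lemma kap_append (Bs : Set (Finset I)) {i j k : I} (w : Walk H i j) (w' : Walk H j k) :
    (w.append w').kap Bs = w.kap Bs + w'.kap Bs := by
  induction w with
  | nil i => simp [append, kap]
  | cons h w ih => simp [append, kap, ih]; omega

def reverse : ∀ {i j : I}, Walk H i j → Walk H j i
  | _, _, nil i => nil i
  | _, _, @cons _ _ _ i j _ h w =>
      (reverse w).append (cons (by rwa [Finset.union_comm]) (nil i))

lemma kap_reverse (Bs : Set (Finset I)) {i j : I} (w : Walk H i j) :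
    w.reverse.kap Bs = w.kap Bs := by
  induction w with
  | nil i => simp [reverse]
  | @cons i j k h w ih =>
    rw [reverse, kap_append, ih, kap, kap, kap]
    rw [Finset.union_comm ({j} : Finset I) {i}]
    omega

open Classical in
lemma kap_mono {Bs Bs' : Set (Finset I)} (hss : Bs ⊆ Bs') {i j : I} (w : Walk H i j) :
    w.kap Bs ≤ w.kap Bs' := by
  induction w with
  | nil i => simp [kap]
  | @cons i j k h w ih =>
    rw [kap, kap]
    have : (if ({i} ∪ {j} : Finset I) ∈ Bs then 1 else 0) ≤
        (if ({i} ∪ {j} : Finset I) ∈ Bs' then 1 else 0) := by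
      split
      · rw [if_pos (hss ‹_›)]
      · simp
    omega

lemma mem_toList_walk {i j : I} (w : Walk H i j) :
    ∀ K ∈ w.toList, ∃ x : I, K = ({x} : Finset I) ∧ Nonempty (Walk H i x) := by
  induction w with
  | nil i => intro K hK; simp [toList] at hK; exact ⟨i, hK, ⟨nil i⟩⟩
  | @cons i j k h w ih =>
    intro K hK
    rw [toList, List.mem_cons] at hK
    rcases hK with rfl | hK
    · exact ⟨i, rfl, ⟨nil i⟩⟩
    · obtain ⟨x, rfl, ⟨w'⟩⟩ := ih K hK
      exact ⟨x, rfl, ⟨cons h w'⟩⟩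

lemma exists_walk {γ : List (Finset I)} (hp : IsKPath H 1 γ) :
    ∀ {i j : I}, Joins γ ({i} : Finset I) ({j} : Finset I) → ∃ w : Walk H i j, w.toList = γ := by
  induction γ with
  | nil => exact absurd rfl hp.1
  | cons J γ ih =>
    intro i j hj
    have hJ : J = ({i} : Finset I) := by
      have h1 := hj.1
      simp only [List.head?_cons, Option.some.injEq] at h1
      exact h1
    subst hJ
    cases γ with
    | nil =>
      have : ({i} : Finset I) = {j} := by simpa [Joins] using hj.2
      have hij : i = j := Finset.singleton_injective this
      subst hij
      exact ⟨nil i, rfl⟩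
    | cons K γ' =>
      have hK1 : K ∈ level H 1 := hp.2.1 K (by simp)
      obtain ⟨x, hx⟩ := Finset.card_eq_one.mp hK1.2
      have hchain := hp.2.2
      rw [List.Chain', List.isChain_cons_cons] at hchain
      have hedge : ({i} ∪ {x} : Finset I) ∈ level H 2 := by rw [← hx]; exact hchain.1
      have hp' : IsKPath H 1 (K :: γ') :=
        ⟨by simp, fun J hJ => hp.2.1 J (by simp [hJ]), hchain.2⟩
      have hjoin' : Joins (K :: γ') ({x} : Finset I) ({j} : Finset I) := by
        refine ⟨by simp [hx], ?_⟩
        have := hj.2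
        rwa [List.getLast?_cons_cons] at this
      obtain ⟨w, hw⟩ := ih hp' hjoin'
      exact ⟨cons hedge w, by rw [toList, hw, hx]⟩

end Walk
end WalkDev

section BlockDev
variable {I : Type*} [DecidableEq I]

def PathRel (H : Set (Finset I)) (k : ℕ) (A : Set (Finset I)) (J K : Finset I) : Prop :=
  ∃ γ, IsKPath H k γ ∧ Joins γ J K ∧ ∀ L ∈ γ, L ∈ A

lemma pathRel_mono {H : Set (Finset I)} {k : ℕ} {A A' : Set (Finset I)} (h : A ⊆ A')
    {J K : Finset I} : PathRel H k A J K → PathRel H k A' J K :=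
  fun ⟨γ, h1, h2, h3⟩ => ⟨γ, h1, h2, fun L hL => h (h3 L hL)⟩

lemma pathRel_refl {H : Set (Finset I)} {k : ℕ} {A : Set (Finset I)} {J : Finset I}
    (hJ : J ∈ level H k) (hA : J ∈ A) : PathRel H k A J J :=
  ⟨[J], ⟨by simp, by simpa, List.isChain_singleton _⟩, ⟨rfl, rfl⟩, by simpa⟩

lemma pathRel_step {H : Set (Finset I)} {k : ℕ} {A : Set (Finset I)} {J K : Finset I}
    (hJ : J ∈ level H k) (hK : K ∈ level H k) (hJK : J ∪ K ∈ level H (k + 1))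
    (hJA : J ∈ A) (hKA : K ∈ A) : PathRel H k A J K := by
  refine ⟨[J, K], ⟨by simp, ?_, ?_⟩, ⟨rfl, rfl⟩, ?_⟩
  · intro L hL; simp only [List.mem_cons, List.mem_singleton] at hL
    rcases hL with rfl | rfl | h; exacts [hJ, hK, absurd h (by simp)]
  · exact List.isChain_pair.mpr hJK
  · intro L hL; simp only [List.mem_cons, List.mem_singleton] at hL
    rcases hL with rfl | rfl | h; exacts [hJA, hKA, absurd h (by simp)]

lemma pathRel_trans {H : Set (Finset I)} {k : ℕ} {A : Set (Finset I)} {J K L : Finset I}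
    (h1 : PathRel H k A J K) (h2 : PathRel H k A K L) : PathRel H k A J L := by
  obtain ⟨γ₁, ⟨hne1, hmem1, hch1⟩, ⟨hh1, hl1⟩, hs1⟩ := h1
  obtain ⟨γ₂, ⟨hne2, hmem2, hch2⟩, ⟨hh2, hl2⟩, hs2⟩ := h2
  obtain ⟨t, rfl⟩ : ∃ t, γ₂ = K :: t := by
    cases γ₂ with
    | nil => exact absurd rfl hne2
    | cons a t =>
      have ha : a = K := by simpa using hh2
      exact ⟨t, by rw [ha]⟩
  cases t with
  | nil =>
    have hKL : K = L := by simpa using hl2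
    subst hKL
    exact ⟨γ₁, ⟨hne1, hmem1, hch1⟩, ⟨hh1, hl1⟩, hs1⟩
  | cons b t' =>
    refine ⟨γ₁ ++ (b :: t'), ⟨by simp [hne1], ?_, ?_⟩, ⟨?_, ?_⟩, ?_⟩
    · intro J' hJ'
      rcases List.mem_append.mp hJ' with h | h
      · exact hmem1 J' h
      · exact hmem2 J' (by simp [h])
    · rw [List.Chain', List.isChain_append]
      refine ⟨hch1, (List.isChain_cons_cons.mp hch2).2, ?_⟩
      intro x hx y hy
      rw [hl1] at hx; cases hx
      simp only [List.head?_cons, Option.mem_def, Option.some.injEq] at hy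
      subst hy
      exact (List.isChain_cons_cons.mp hch2).1
    · rw [List.head?_append, hh1]; rfl
    · rw [List.getLast?_append]
      have : (b :: t').getLast? = some L := by
        rw [← hl2, List.getLast?_cons_cons]
      rw [this]; rfl
    · intro J' hJ'
      rcases List.mem_append.mp hJ' with h | h
      · exact hs1 J' h
      · exact hs2 J' (by simp [h])

lemma block_ext {H : Set (Finset I)} {D : NodalDatum H} {Bb : Set (Finset I)}
    (hB : IsSepBlock D Bb) {e x : Finset I} (he : e ∈ Bb)
    (hxN : x ∈ D.N) (hxl : x ∈ level H 2) (hux : e ∪ x ∈ level H 3) : x ∈ Bb := by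
  obtain ⟨⟨hne, hsub, hconn, hmax⟩, hstar⟩ := hB
  have hele : e ∈ level H 2 := (hsub he).2
  have hBlvl : ∀ p ∈ Bb, p ∈ level H 2 := fun p hp => (hsub hp).2
  have key : KConnectedIn H 2 (Bb ∪ {x}) := by
    intro J hJ K hK
    have pex : PathRel H 2 (Bb ∪ {x}) e x :=
      pathRel_step hele hxl hux (Or.inl he) (Or.inr rfl)
    have pxe : PathRel H 2 (Bb ∪ {x}) x e :=
      pathRel_step hxl hele (by rwa [Finset.union_comm]) (Or.inr rfl) (Or.inl he)
    rcases hJ with hJ | hJ <;> rcases hK with hK | hK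
    · exact pathRel_mono Set.subset_union_left (hconn J hJ K hK)
    · cases hK
      exact pathRel_trans (pathRel_mono Set.subset_union_left (hconn J hJ e he)) pex
    · cases hJ
      exact pathRel_trans pxe (pathRel_mono Set.subset_union_left (hconn e he K hK))
    · cases hJ; cases hK
      exact pathRel_refl hxl (Or.inr rfl)
  have heq := hmax (Bb ∪ {x}) Set.subset_union_left
    (by rintro p (hp | hp)
        · exact hsub hp
        · cases hp; exact ⟨hxN, hxl⟩) key
  rw [← heq]; exact Or.inr rfl

lemma pair_other {e : Finset I} (h2 : e.card = 2) {p : I} (hp : p ∈ e) :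
    ∃ y, y ≠ p ∧ e = {p, y} := by
  obtain ⟨a, b, hab, rfl⟩ := Finset.card_eq_two.mp h2
  simp only [Finset.mem_insert, Finset.mem_singleton] at hp
  rcases hp with rfl | rfl
  · exact ⟨b, fun h => hab h.symm, rfl⟩
  · exact ⟨a, fun h => hab h, by ext c; simp; tauto⟩

lemma part3 {H : Set (Finset I)} (D : NodalDatum H) {T : Finset I}
    (hTN : T ∈ D.N) (hT3 : T.card = 3) :
    ∃ p q r : I, q ≠ r ∧ p ≠ q ∧ p ≠ r ∧ T = {p, q, r} ∧
      (∀ e : Finset I, e ⊆ T →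
        (e ∈ D.N ↔ (e ∩ {p}).Nonempty ∧ (e ∩ ({q, r} : Finset I)).Nonempty)) := by
  have hPne := D.plus_nonempty T hTN
  have hQne := D.minus_nonempty T hTN
  have hun := D.union_eq T hTN
  have hdisj := D.disj T hTN
  have hcard : (D.plus T).card + (D.minus T).card = 3 := by
    rw [← Finset.card_union_of_disjoint hdisj, hun, hT3]
  have hP1 := Finset.card_pos.mpr hPne
  have hQ1 := Finset.card_pos.mpr hQne
  have hcases : (D.plus T).card = 1 ∧ (D.minus T).card = 2 ∨
      (D.plus T).card = 2 ∧ (D.minus T).card = 1 := by omega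
  have hdisj' := Finset.disjoint_left.mp hdisj
  rcases hcases with ⟨hc1, hc2⟩ | ⟨hc1, hc2⟩
  · obtain ⟨p, hp⟩ := Finset.card_eq_one.mp hc1
    obtain ⟨q, r, hqr, hQ⟩ := Finset.card_eq_two.mp hc2
    refine ⟨p, q, r, hqr, ?_, ?_, ?_, ?_⟩
    · intro h; exact hdisj' (a := p) (by simp [hp]) (by rw [hQ]; simp [h])
    · intro h; exact hdisj' (a := p) (by simp [hp]) (by rw [hQ]; simp [h])
    · rw [← hun, hp, hQ]; ext c; simp; tauto
    · intro e hsub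
      rw [D.mem_iff T hTN e hsub, hp, hQ]
  · obtain ⟨q, r, hqr, hQ⟩ := Finset.card_eq_two.mp hc1
    obtain ⟨p, hp⟩ := Finset.card_eq_one.mp hc2
    refine ⟨p, q, r, hqr, ?_, ?_, ?_, ?_⟩
    · intro h; exact hdisj' (a := p) (by rw [hQ]; simp [h]) (by simp [hp])
    · intro h; exact hdisj' (a := p) (by rw [hQ]; simp [h]) (by simp [hp])
    · rw [← hun, hp, hQ]; ext c; simp; tauto
    · intro e hsub
      rw [D.mem_iff T hTN e hsub, hp, hQ, and_comm]

lemma block_step {H : Set (Finset I)} (hH : IsCSS H) {D : NodalDatum H} {Bb : Set (Finset I)}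
    (hB : IsSepBlock D Bb) {e f : Finset I} (he : e ∈ Bb) (hf : f ∈ Bb)
    (hef : e ∪ f ∈ level H 3) :
    ∀ v ∈ e, ∃ w ∈ f, v = w ∨
      (({v} ∪ {w} : Finset I) ∈ level H 2 ∧ ({v} ∪ {w} : Finset I) ∉ D.N) := by
  have hsub := hB.1.2.1
  have hTH : e ∪ f ∈ H := hef.1
  have hTN : e ∪ f ∈ D.N := ((hB.2 he).2) (e ∪ f) hTH Finset.subset_union_left
  obtain ⟨p, q, r, hqr, hpq, hpr, hTeq, hcrit⟩ := part3 D hTN hef.2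
  have heN : e ∈ D.N := (hsub he).1
  have hfN : f ∈ D.N := (hsub hf).1
  have hesub : e ⊆ e ∪ f := Finset.subset_union_left
  have hfsub : f ⊆ e ∪ f := Finset.subset_union_right
  have hpe : p ∈ e := by
    obtain ⟨a, ha⟩ := ((hcrit e hesub).mp heN).1
    rw [Finset.mem_inter, Finset.mem_singleton] at ha
    rw [← ha.2]; exact ha.1
  have hpf : p ∈ f := by
    obtain ⟨a, ha⟩ := ((hcrit f hfsub).mp hfN).1
    rw [Finset.mem_inter, Finset.mem_singleton] at ha
    rw [← ha.2]; exact ha.1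
  intro v hv
  by_cases hvp : v = p
  · exact ⟨p, hpf, Or.inl hvp⟩
  by_cases hvf : v ∈ f
  · exact ⟨v, hvf, Or.inl rfl⟩
  obtain ⟨z, hzp, hfeq⟩ := pair_other (hsub hf).2.2 hpf
  have hzf : z ∈ f := by rw [hfeq]; simp
  have hvz : v ≠ z := fun h => hvf (h ▸ hzf)
  have hvzsub : ({v} ∪ {z} : Finset I) ⊆ e ∪ f := by
    intro a ha
    rcases Finset.mem_union.mp ha with h | h
    · rw [Finset.mem_singleton] at h; exact hesub (h ▸ hv)
    · rw [Finset.mem_singleton] at h; exact hfsub (h ▸ hzf)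
  refine ⟨z, hzf, Or.inr ⟨⟨hH.1 _ hTH _ hvzsub, ?_⟩, ?_⟩⟩
  · rw [show ({v} ∪ {z} : Finset I) = {v, z} from rfl]
    exact Finset.card_pair hvz
  · intro hN
    obtain ⟨a, ha⟩ := ((hcrit _ hvzsub).mp hN).1
    rw [Finset.mem_inter, Finset.mem_singleton] at ha
    obtain ⟨ham, rfl⟩ := ha
    rcases Finset.mem_union.mp ham with h | h <;> rw [Finset.mem_singleton] at h
    · exact hvp h.symm
    · exact hzp h.symm

end BlockDev

section TriDev
variable {I : Type*} [DecidableEq I]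

set_option maxHeartbeats 1000000 in
open Classical in
lemma tri_parity {H : Set (Finset I)} (hH : IsCSS H) {D : NodalDatum H} {Bb : Set (Finset I)}
    (hB : IsSepBlock D Bb) {i1 i2 i3 : I}
    (h13 : ({i1} ∪ {i3} : Finset I) ∈ level H 2)
    (h32 : ({i3} ∪ {i2} : Finset I) ∈ level H 2)
    (hT : (({i1} ∪ {i3}) ∪ ({i3} ∪ {i2}) : Finset I) ∈ level H 3) :
    ((if ({i1} ∪ {i2} : Finset I) ∈ Bb then 1 else 0) +
      ((if ({i1} ∪ {i3} : Finset I) ∈ Bb then 1 else 0) +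
       (if ({i3} ∪ {i2} : Finset I) ∈ Bb then 1 else 0))) % 2 = 0 := by
  obtain ⟨T, hTdef⟩ : ∃ T : Finset I, (({i1} ∪ {i3}) ∪ ({i3} ∪ {i2}) : Finset I) = T :=
    ⟨_, rfl⟩
  rw [hTdef] at hT
  have hmemT : ∀ a : I, a ∈ T ↔ a = i1 ∨ a = i3 ∨ a = i2 := by
    intro a
    rw [← hTdef]
    simp only [Finset.mem_union, Finset.mem_singleton]
    tauto
  have h13' : i1 ≠ i3 := by
    intro h; subst h
    have : ({i1} ∪ {i1} : Finset I).card = 2 := h13.2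
    simp at this
  have h32' : i3 ≠ i2 := by
    intro h; subst h
    have : ({i3} ∪ {i3} : Finset I).card = 2 := h32.2
    simp at this
  have h12' : i1 ≠ i2 := by
    intro h; subst h
    have hc : T.card = 3 := hT.2
    have : T = {i1} ∪ {i3} := by
      ext a
      rw [hmemT a]
      simp only [Finset.mem_union, Finset.mem_singleton]
      tauto
    rw [this] at hc
    have : ({i1} ∪ {i3} : Finset I).card = 2 := h13.2
    omega
  have hsub12 : ({i1} ∪ {i2} : Finset I) ⊆ T := by
    intro a ha; rcases Finset.mem_union.mp ha with h | h <;>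
      rw [Finset.mem_singleton] at h <;> subst h <;> simp [hmemT]
  have hsub13 : ({i1} ∪ {i3} : Finset I) ⊆ T := by
    intro a ha; rcases Finset.mem_union.mp ha with h | h <;>
      rw [Finset.mem_singleton] at h <;> subst h <;> simp [hmemT]
  have hsub32 : ({i3} ∪ {i2} : Finset I) ⊆ T := by
    intro a ha; rcases Finset.mem_union.mp ha with h | h <;>
      rw [Finset.mem_singleton] at h <;> subst h <;> simp [hmemT]
  have hc12 : ({i1} ∪ {i2} : Finset I).card = 2 := Finset.card_pair h12'
  have hc13 : ({i1} ∪ {i3} : Finset I).card = 2 := Finset.card_pair h13'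
  have hc32 : ({i3} ∪ {i2} : Finset I).card = 2 := Finset.card_pair h32'
  by_cases hex : ({i1} ∪ {i2} : Finset I) ∈ Bb ∨ ({i1} ∪ {i3} : Finset I) ∈ Bb ∨
      ({i3} ∪ {i2} : Finset I) ∈ Bb
  swap
  · push_neg at hex
    rw [if_neg hex.1, if_neg hex.2.1, if_neg hex.2.2]
  · have hTN : T ∈ D.N := by
      rcases hex with h | h | h
      · exact (hB.2 h).2 T hT.1 hsub12
      · exact (hB.2 h).2 T hT.1 hsub13
      · exact (hB.2 h).2 T hT.1 hsub32
    obtain ⟨p, q, r, hqr, hpq, hpr, hTeq, hcrit⟩ := part3 D hTN hT.2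
    obtain ⟨e₀, he₀B, he₀sub, he₀c⟩ : ∃ e₀, e₀ ∈ Bb ∧ e₀ ⊆ T ∧ e₀.card = 2 := by
      rcases hex with h | h | h
      exacts [⟨_, h, hsub12, hc12⟩, ⟨_, h, hsub13, hc13⟩, ⟨_, h, hsub32, hc32⟩]
    have hforward : ∀ e, e ∈ Bb → e ⊆ T → p ∈ e := by
      intro e heB hesub
      have heN : e ∈ D.N := (hB.1.2.1 heB).1
      obtain ⟨a, ha⟩ := ((hcrit e hesub).mp heN).1
      rw [Finset.mem_inter, Finset.mem_singleton] at ha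
      rw [← ha.2]; exact ha.1
    have hpe₀ : p ∈ e₀ := hforward e₀ he₀B he₀sub
    obtain ⟨y₀, hy₀p, he₀eq⟩ := pair_other he₀c hpe₀
    have hy₀qr : y₀ = q ∨ y₀ = r := by
      have : y₀ ∈ T := he₀sub (by rw [he₀eq]; simp)
      rw [hTeq] at this
      simp only [Finset.mem_insert, Finset.mem_singleton] at this
      rcases this with h | h | h
      · exact absurd h hy₀p
      · exact Or.inl h
      · exact Or.inr h
    have hchar : ∀ e, e ⊆ T → e.card = 2 → (e ∈ Bb ↔ p ∈ e) := by
      intro e hesub hec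
      constructor
      · exact fun h => hforward e h hesub
      · intro hpe
        obtain ⟨y, hyp, heeq⟩ := pair_other hec hpe
        have hyqr : y = q ∨ y = r := by
          have : y ∈ T := hesub (by rw [heeq]; simp)
          rw [hTeq] at this
          simp only [Finset.mem_insert, Finset.mem_singleton] at this
          rcases this with h | h | h
          · exact absurd h hyp
          · exact Or.inl h
          · exact Or.inr h
        have heN : e ∈ D.N := by
          rw [hcrit e hesub]
          constructor
          · exact ⟨p, by simp [heeq]⟩
          · refine ⟨y, ?_⟩
            rw [Finset.mem_inter]
            refine ⟨by rw [heeq]; simp, ?_⟩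
            rcases hyqr with rfl | rfl <;> simp
        have helvl : e ∈ level H 2 := ⟨hH.1 T hT.1 e hesub, hec⟩
        by_cases hee₀ : e = e₀
        · rw [hee₀]; exact he₀B
        · have hyy₀ : y ≠ y₀ := by
            intro h; subst h
            exact hee₀ (by rw [heeq, he₀eq])
          have huni : e₀ ∪ e = T := by
            rw [he₀eq, heeq, hTeq]
            ext a
            simp only [Finset.mem_union, Finset.mem_insert, Finset.mem_singleton]
            rcases hyqr with rfl | rfl <;> rcases hy₀qr with rfl | rfl <;> tauto
          exact block_ext hB he₀B heN helvl (by rw [huni]; exact hT)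
    have hpT : p ∈ T := by rw [hTeq]; simp
    rw [hmemT] at hpT
    have m12 : p ∈ ({i1} ∪ {i2} : Finset I) ↔ (p = i1 ∨ p = i2) := by simp
    have m13 : p ∈ ({i1} ∪ {i3} : Finset I) ↔ (p = i1 ∨ p = i3) := by simp
    have m32 : p ∈ ({i3} ∪ {i2} : Finset I) ↔ (p = i3 ∨ p = i2) := by simp
    rcases hpT with hp1 | hp1 | hp1
    · rw [if_pos ((hchar _ hsub12 hc12).mpr (m12.mpr (Or.inl hp1))),
        if_pos ((hchar _ hsub13 hc13).mpr (m13.mpr (Or.inl hp1))),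
        if_neg (fun h => by
          rcases m32.mp (hforward _ h hsub32) with h' | h'
          exacts [h13' (hp1.symm.trans h'), h12' (hp1.symm.trans h')])]
    · rw [if_neg (fun h => by
          rcases m12.mp (hforward _ h hsub12) with h' | h'
          exacts [h13' (h'.symm.trans hp1), h32' (hp1.symm.trans h')]),
        if_pos ((hchar _ hsub13 hc13).mpr (m13.mpr (Or.inr hp1))),
        if_pos ((hchar _ hsub32 hc32).mpr (m32.mpr (Or.inl hp1)))]
    · rw [if_pos ((hchar _ hsub12 hc12).mpr (m12.mpr (Or.inr hp1))),
        if_neg (fun h => by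
          rcases m13.mp (hforward _ h hsub13) with h' | h'
          exacts [h12' (h'.symm.trans hp1), h32' (h'.symm.trans hp1)]),
        if_pos ((hchar _ hsub32 hc32).mpr (m32.mpr (Or.inr hp1)))]

lemma walk_block {H : Set (Finset I)} (hH : IsCSS H) {D : NodalDatum H} {Bb : Set (Finset I)}
    (hB : IsSepBlock D Bb) :
    ∀ γ : List (Finset I), IsKPath H 2 γ → (∀ K ∈ γ, K ∈ Bb) →
      ∀ e e' : Finset I, Joins γ e e' → ∀ v ∈ e,
        ∃ w, w ∈ e' ∧ ∃ wk : Walk H v w, wk.kap D.N = 0 := by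
  intro γ
  induction γ with
  | nil => intro hp; exact absurd rfl hp.1
  | cons J γ' ih =>
    intro hp hsup e e' hj v hv
    have hJ : J = e := by
      have h1 := hj.1
      simp only [List.head?_cons, Option.some.injEq] at h1
      exact h1
    subst hJ
    cases γ' with
    | nil =>
      have hee' : J = e' := by simpa [Joins] using hj.2
      subst hee'
      exact ⟨v, hv, Walk.nil v, rfl⟩
    | cons K γ'' =>
      have hchain := List.isChain_cons_cons.mp hp.2.2
      have hedge : J ∪ K ∈ level H 3 := hchain.1
      have hKB : K ∈ Bb := hsup K (by simp)
      have hJB : J ∈ Bb := hsup J (by simp)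
      obtain ⟨w₁, hw₁K, hcase⟩ := block_step hH hB hJB hKB hedge v hv
      have hp' : IsKPath H 2 (K :: γ'') :=
        ⟨by simp, fun L hL => hp.2.1 L (by simp [hL]), hchain.2⟩
      have hsup' : ∀ L ∈ K :: γ'', L ∈ Bb := fun L hL => hsup L (by simp [hL])
      have hj' : Joins (K :: γ'') K e' := by
        refine ⟨rfl, ?_⟩
        have := hj.2
        rwa [List.getLast?_cons_cons] at this
      obtain ⟨w, hw, wk₂, hk₂⟩ := ih hp' hsup' K e' hj' w₁ hw₁K
      rcases hcase with rfl | ⟨hlvl, hnotN⟩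
      · exact ⟨w, hw, wk₂, hk₂⟩
      · refine ⟨w, hw, Walk.cons hlvl wk₂, ?_⟩
        rw [Walk.kap, if_neg hnotN, hk₂]

end TriDev


section ParityDev
variable {I : Type*} [DecidableEq I]

open Classical in
lemma kappa_seg_congr {Bb : Set (Finset I)} (δ ρ ε ε' : List (Finset I))
    (hne : ε ≠ []) (hne' : ε' ≠ []) (hh : ε.head? = ε'.head?) (hl : ε.getLast? = ε'.getLast?)
    (hk : kappa Bb ε % 2 = kappa Bb ε' % 2) :
    kappa Bb (δ ++ ε ++ ρ) % 2 = kappa Bb (δ ++ ε' ++ ρ) % 2 := by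
  rw [List.append_assoc, List.append_assoc]
  rw [kappa_append Bb δ (ε ++ ρ), kappa_append Bb δ (ε' ++ ρ),
    kappa_append Bb ε ρ, kappa_append Bb ε' ρ]
  rw [List.head?_append, List.head?_append, hh, hl]
  omega

open Classical in
lemma kappa_mod_elem {H : Set (Finset I)} (hH : IsCSS H) {D : NodalDatum H}
    {Bb : Set (Finset I)} (hB : IsSepBlock D Bb) {γ₁ γ₂ : List (Finset I)}
    (h : ElemHomotopy H γ₁ γ₂) : kappa Bb γ₁ % 2 = kappa Bb γ₂ % 2 := by
  obtain ⟨δ, ε₁, ε₂, ρ, hpair, rfl, rfl⟩ := h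
  suffices hcore : ∀ ε ε' : List (Finset I), ElemPairCore H ε ε' →
      kappa Bb (δ ++ ε ++ ρ) % 2 = kappa Bb (δ ++ ε' ++ ρ) % 2 by
    rcases hpair with h | h
    exacts [hcore _ _ h, (hcore _ _ h).symm]
  intro ε ε' hc
  rcases hc with rfl | ⟨i1, i2, rfl, rfl⟩ | ⟨i1, i2, i3, rfl, rfl, hpath⟩
  · rfl
  · apply kappa_seg_congr <;> try simp
    have h1 : kappa Bb [({i1} : Finset I), {i2}, {i1}] =
        (if ({i1} ∪ {i2} : Finset I) ∈ Bb then 1 else 0) +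
        (if ({i2} ∪ {i1} : Finset I) ∈ Bb then 1 else 0) := by
      simp only [kappa, subSup, List.tail_cons, List.zipWith_cons_cons, List.zipWith_nil_right, List.zipWith, List.countP_cons, List.countP_nil,
        decide_eq_true_eq]
      split <;> split <;> omega
    have h2 : kappa Bb [({i1} : Finset I)] = 0 := rfl
    rw [h1, h2, Finset.union_comm]
    omega
  · have h13 : ({i1} ∪ {i3} : Finset I) ∈ level H 2 := by
      have := hpath.2.1 ({i1, i3} : Finset I) (by simp)
      rwa [Finset.insert_eq] at this
    have h32 : ({i3} ∪ {i2} : Finset I) ∈ level H 2 := by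
      have := hpath.2.1 ({i3, i2} : Finset I) (by simp)
      rwa [Finset.insert_eq] at this
    have hT : (({i1} ∪ {i3}) ∪ ({i3} ∪ {i2}) : Finset I) ∈ level H 3 := by
      have := (List.isChain_cons_cons.mp hpath.2.2).1
      rwa [Finset.insert_eq, Finset.insert_eq ] at this
    have htri := tri_parity hH hB h13 h32 hT
    apply kappa_seg_congr <;> try simp
    have h1 : kappa Bb [({i1} : Finset I), {i2}] =
        (if ({i1} ∪ {i2} : Finset I) ∈ Bb then 1 else 0) := by
      simp only [kappa, subSup, List.tail_cons, List.zipWith_cons_cons, List.zipWith_nil_right, List.zipWith, List.countP_cons, List.countP_nil,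
        decide_eq_true_eq]
      split <;> omega
    have h2 : kappa Bb [({i1} : Finset I), {i3}, {i2}] =
        (if ({i1} ∪ {i3} : Finset I) ∈ Bb then 1 else 0) +
        (if ({i3} ∪ {i2} : Finset I) ∈ Bb then 1 else 0) := by
      simp only [kappa, subSup, List.tail_cons, List.zipWith_cons_cons, List.zipWith_nil_right, List.zipWith, List.countP_cons, List.countP_nil,
        decide_eq_true_eq]
      split <;> split <;> omega
    rw [h1, h2]
    omega

open Classical in
lemma parity_invariance {H : Set (Finset I)} (hH : IsCSS H) (hsc : SimplyConnected H)
    {D : NodalDatum H} {Bb : Set (Finset I)} (hB : IsSepBlock D Bb)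
    {i j : I} (w w' : Walk H i j) :
    w.kap Bb % 2 = w'.kap Bb % 2 := by
  have h1 := w.isKPath_toList hH.2
  have h2 := w'.isKPath_toList hH.2
  have hhom := hsc.2 w.toList w'.toList h1 h2 h1.2.1 h2.2.1
    (by rw [Walk.head?_toList, Walk.head?_toList])
    (by rw [Walk.getLast?_toList, Walk.getLast?_toList])
  obtain ⟨-, hchain⟩ := hhom
  rw [Walk.kap_eq_kappa, Walk.kap_eq_kappa]
  have key : ∀ {b : List (Finset I)},
      Relation.ReflTransGen (fun g₁ g₂ => ElemHomotopy H g₁ g₂ ∧ IsKPath H 1 g₂ ∧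
        ∀ J ∈ g₂, J ∈ level H 1) w.toList b →
      kappa Bb w.toList % 2 = kappa Bb b % 2 := by
    intro b hb
    induction hb with
    | refl => rfl
    | tail _ hstep ih => exact ih.trans (kappa_mod_elem hH hB hstep.1)
  exact key hchain

end ParityDev


section ReduceDev
variable {I : Type*} [DecidableEq I]

open Classical in
lemma walk_split {H : Set (Finset I)} {S : Set (Finset I)} :
    ∀ {i j : I} (w : Walk H i j), w.kap S ≠ 0 →
      ∃ (a b : I) (w₁ : Walk H i a) (w₂ : Walk H b j),
        ({a} ∪ {b} : Finset I) ∈ level H 2 ∧ ({a} ∪ {b} : Finset I) ∈ S ∧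
        w₁.kap S = 0 ∧
        ∀ Bs : Set (Finset I), w.kap Bs =
          w₁.kap Bs + (if ({a} ∪ {b} : Finset I) ∈ Bs then 1 else 0) + w₂.kap Bs := by
  intro i j w
  induction w with
  | nil i => intro h; exact absurd rfl h
  | @cons i a k hlvl w ih =>
    intro h
    by_cases hS : ({i} ∪ {a} : Finset I) ∈ S
    · refine ⟨i, a, Walk.nil i, w, hlvl, hS, rfl, ?_⟩
      intro Bs
      rw [Walk.kap, Walk.kap]
      omega
    · have h' : w.kap S ≠ 0 := by
        intro h0
        apply h
        rw [Walk.kap, if_neg hS, h0]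
      obtain ⟨a', b', w₁, w₂, hlvl', hS', hz, heq⟩ := ih h'
      refine ⟨a', b', Walk.cons hlvl w₁, w₂, hlvl', hS', ?_, ?_⟩
      · rw [Walk.kap, if_neg hS, hz]
      · intro Bs
        rw [Walk.kap, heq Bs, Walk.kap]
        omega

open Classical in
lemma reduction {H : Set (Finset I)} (hH : IsCSS H) (hsc : SimplyConnected H)
    {D : NodalDatum H} {m : ℕ} {Bf : Fin m → Set (Finset I)}
    (hblk : ∀ ℓ, IsSepBlock D (Bf ℓ)) :
    ∀ (c : ℕ) {i j : I} (w : Walk H i j), w.kap (⋃ ℓ, Bf ℓ) = c →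
      (∀ ℓ, Even (w.kap (Bf ℓ))) →
      ∃ w' : Walk H i j, w'.kap (⋃ ℓ, Bf ℓ) = 0 := by
  intro c
  induction c using Nat.strong_induction_on with
  | _ c ihc =>
    intro i j w hc heven
    rcases Nat.eq_zero_or_pos c with rfl | hpos
    · exact ⟨w, hc⟩
    have hne : w.kap (⋃ ℓ, Bf ℓ) ≠ 0 := by omega
    obtain ⟨a₁, b₁, w₁, w₂, hlvl1, hS1, hz1, heq1⟩ := walk_split w hne
    obtain ⟨ℓ, hℓ⟩ := Set.mem_iUnion.mp hS1
    have hsubU : Bf ℓ ⊆ ⋃ ℓ', Bf ℓ' := Set.subset_iUnion Bf ℓ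
    have hw1z : w₁.kap (Bf ℓ) = 0 :=
      Nat.le_zero.mp (hz1 ▸ Walk.kap_mono hsubU w₁)
    have hodd : w₂.kap (Bf ℓ) % 2 = 1 := by
      have h1 := heq1 (Bf ℓ)
      have h2 := heven ℓ
      rw [h1, hw1z, if_pos hℓ] at h2
      rw [Nat.even_iff] at h2
      omega
    have hw2ne : w₂.kap (Bf ℓ) ≠ 0 := by omega
    obtain ⟨a₂, b₂, w₃, w₄, hlvl2, hS2, hz3, heq3⟩ := walk_split w₂ hw2ne
    have hconn := (hblk ℓ).1.2.2.1
    obtain ⟨γ, hγp, hγj, hγs⟩ := hconn _ hℓ _ hS2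
    obtain ⟨u, hu, wk, hwkN⟩ := walk_block hH (hblk ℓ) γ hγp hγs _ _ hγj a₁ (by simp)
    have hwkS : ∀ Bs : Set (Finset I), Bs ⊆ D.N → wk.kap Bs = 0 := by
      intro Bs hBs
      exact Nat.le_zero.mp (hwkN ▸ Walk.kap_mono hBs wk)
    have hBfN : ∀ ℓ' : Fin m, Bf ℓ' ⊆ D.N := fun ℓ' x hx => ((hblk ℓ').1.2.1 hx).1
    have hSsubN : (⋃ ℓ', Bf ℓ') ⊆ D.N := by
      intro x hx
      obtain ⟨ℓ', hx'⟩ := Set.mem_iUnion.mp hx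
      exact hBfN ℓ' hx'
    rcases Finset.mem_union.mp hu with hu | hu <;> rw [Finset.mem_singleton] at hu
    · -- u = a₂ : contradiction with parity invariance
      exfalso
      subst hu
      have hpar := parity_invariance hH hsc (hblk ℓ) w
        (w₁.append (wk.append ((w₃.reverse).append w₂)))
      rw [Walk.kap_append, Walk.kap_append, Walk.kap_append, Walk.kap_reverse,
        hw1z, hwkS _ (hBfN ℓ), hz3] at hpar
      have hw := heq1 (Bf ℓ)
      rw [hw1z, if_pos hℓ] at hw
      omega
    · -- u = b₂ : shortcut, strictly fewer crossings
      subst hu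
      have hk' : (w₁.append (wk.append w₄)).kap (⋃ ℓ', Bf ℓ') =
          w₄.kap (⋃ ℓ', Bf ℓ') := by
        rw [Walk.kap_append, Walk.kap_append, hz1, hwkS _ hSsubN]
        omega
      have hlt : (w₁.append (wk.append w₄)).kap (⋃ ℓ', Bf ℓ') < c := by
        rw [hk']
        have h1 := heq1 (⋃ ℓ', Bf ℓ')
        have h3 := heq3 (⋃ ℓ', Bf ℓ')
        rw [if_pos hS1] at h1
        rw [if_pos (hsubU hS2)] at h3
        omega
      have heven' : ∀ ℓ' : Fin m, Even ((w₁.append (wk.append w₄)).kap (Bf ℓ')) := by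
        intro ℓ'
        have hpar := parity_invariance hH hsc (hblk ℓ') w (w₁.append (wk.append w₄))
        have hthis := heven ℓ'
        rw [Nat.even_iff] at hthis ⊢
        omega
      exact ihc _ hlt (w₁.append (wk.append w₄)) rfl heven'

end ReduceDev


section MainDev
variable {I : Type*} [DecidableEq I]

open Classical in
theorem main_aux (H : Set (Finset I)) (hH : IsCSS H) (hsc : SimplyConnected H)
    (D : NodalDatum H) {m : ℕ} (Bf : Fin m → Set (Finset I))
    (hblk : ∀ ℓ : Fin m, IsSepBlock D (Bf ℓ)) (i₀ : I) :
    ∀ C : Set (Finset I),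
      IsKComponent (H \ Cl H (⋃ ℓ : Fin m, Bf ℓ)) 1 (level H 1) C ↔
      ∃ c ∈ Set.range (fun (i : I) (ℓ : Fin m) =>
          decide (({i} : Finset I) ∈ BBset H (Bf ℓ) i₀)),
        C = {J : Finset I | ∃ i : I,
          J = ({i} : Finset I) ∧
          (fun ℓ : Fin m => decide (({i} : Finset I) ∈ BBset H (Bf ℓ) i₀)) = c} := by
  have hsingH : ∀ x : I, ({x} : Finset I) ∈ H := hH.2
  have hlvl1 : ∀ x : I, ({x} : Finset I) ∈ level H 1 :=
    fun x => ⟨hsingH x, Finset.card_singleton x⟩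
  have hS2 : ∀ J ∈ (⋃ ℓ : Fin m, Bf ℓ), J.card = 2 := by
    intro J hJ
    obtain ⟨ℓ, hℓ⟩ := Set.mem_iUnion.mp hJ
    exact ((hblk ℓ).1.2.1 hℓ).2.2
  have hsingHm : ∀ x : I, ({x} : Finset I) ∈ H \ Cl H (⋃ ℓ : Fin m, Bf ℓ) := by
    intro x
    refine ⟨hsingH x, ?_⟩
    rintro ⟨-, J, hJS, hJsub⟩
    have h2 := hS2 J hJS
    have := Finset.card_le_card hJsub
    rw [Finset.card_singleton] at this
    omega
  have hedge : ∀ e : Finset I, e ∈ level H 2 →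
      (e ∈ level (H \ Cl H (⋃ ℓ : Fin m, Bf ℓ)) 2 ↔ e ∉ (⋃ ℓ : Fin m, Bf ℓ)) := by
    intro e helvl
    constructor
    · intro hm he
      exact hm.1.2 ⟨helvl.1, e, he, Finset.Subset.refl e⟩
    · intro he
      refine ⟨⟨helvl.1, ?_⟩, helvl.2⟩
      rintro ⟨-, J, hJS, hJsub⟩
      have : J = e := Finset.eq_of_subset_of_card_le hJsub (by rw [hS2 J hJS, helvl.2])
      exact he (this ▸ hJS)
  have toHm : ∀ {i j : I} (w : Walk H i j), w.kap (⋃ ℓ : Fin m, Bf ℓ) = 0 →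
      Nonempty (Walk (H \ Cl H (⋃ ℓ : Fin m, Bf ℓ)) i j) := by
    intro i j w
    induction w with
    | nil i => exact fun _ => ⟨Walk.nil i⟩
    | @cons i a k hlvl w ih =>
      intro h0
      rw [Walk.kap] at h0
      by_cases hin : ({i} ∪ {a} : Finset I) ∈ (⋃ ℓ : Fin m, Bf ℓ)
      · rw [if_pos hin] at h0; omega
      · rw [if_neg hin] at h0
        obtain ⟨w'⟩ := ih (by omega)
        exact ⟨Walk.cons ((hedge _ hlvl).mpr hin) w'⟩
  have ofHm : ∀ {i j : I} (w : Walk (H \ Cl H (⋃ ℓ : Fin m, Bf ℓ)) i j),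
      ∃ w' : Walk H i j, w'.kap (⋃ ℓ : Fin m, Bf ℓ) = 0 := by
    intro i j w
    induction w with
    | nil i => exact ⟨Walk.nil i, rfl⟩
    | @cons i a k hlvl w ih =>
      obtain ⟨w', hw'⟩ := ih
      have hlvlH : ({i} ∪ {a} : Finset I) ∈ level H 2 := ⟨hlvl.1.1, hlvl.2⟩
      refine ⟨Walk.cons hlvlH w', ?_⟩
      rw [Walk.kap, if_neg ((hedge _ hlvlH).mp hlvl), hw']
  have hwalkH : ∀ i j : I, Nonempty (Walk H i j) := by
    intro i j
    obtain ⟨γ, hp, hj, -⟩ := hsc.1 {i} (hlvl1 i) {j} (hlvl1 j)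
    obtain ⟨w, -⟩ := Walk.exists_walk hp hj
    exact ⟨w⟩
  have hBB : ∀ (ℓ : Fin m) (i : I) (w : Walk H i₀ i),
      (({i} : Finset I) ∈ BBset H (Bf ℓ) i₀ ↔ w.kap (Bf ℓ) % 2 = 1) := by
    intro ℓ i w
    constructor
    · rintro ⟨-, γ, hγp, hγj, hγodd⟩
      obtain ⟨w', hw'⟩ := Walk.exists_walk hγp hγj
      have hpi := parity_invariance hH hsc (hblk ℓ) w w'
      rw [Walk.kap_eq_kappa (Bf ℓ) w', hw'] at hpi
      rw [Nat.odd_iff] at hγodd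
      omega
    · intro hodd
      refine ⟨hlvl1 i, w.toList, w.isKPath_toList hsingH, w.joins_toList, ?_⟩
      rw [Nat.odd_iff, ← Walk.kap_eq_kappa]
      exact hodd
  have bridge : ∀ i j : I,
      Nonempty (Walk (H \ Cl H (⋃ ℓ : Fin m, Bf ℓ)) i j) ↔
      (∀ ℓ : Fin m, (({i} : Finset I) ∈ BBset H (Bf ℓ) i₀ ↔
        ({j} : Finset I) ∈ BBset H (Bf ℓ) i₀)) := by
    intro i j
    constructor
    · rintro ⟨wm⟩
      obtain ⟨w, hw0⟩ := ofHm wm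
      intro ℓ
      obtain ⟨wi⟩ := hwalkH i₀ i
      have hwℓ : w.kap (Bf ℓ) = 0 :=
        Nat.le_zero.mp (hw0 ▸ Walk.kap_mono (Set.subset_iUnion Bf ℓ) w)
      rw [hBB ℓ i wi, hBB ℓ j (wi.append w), Walk.kap_append, hwℓ]
      omega
    · intro hiff
      obtain ⟨wi⟩ := hwalkH i₀ i
      obtain ⟨wj⟩ := hwalkH i₀ j
      have heven : ∀ ℓ : Fin m, Even ((wi.reverse.append wj).kap (Bf ℓ)) := by
        intro ℓ
        have h3 := hiff ℓ
        rw [hBB ℓ i wi, hBB ℓ j wj] at h3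
        rw [Nat.even_iff, Walk.kap_append, Walk.kap_reverse]
        omega
      obtain ⟨w', hw'⟩ := reduction hH hsc hblk _ (wi.reverse.append wj) rfl heven
      exact toHm w' hw'
  have hPhiEq : ∀ x y : I,
      ((fun ℓ : Fin m => decide (({x} : Finset I) ∈ BBset H (Bf ℓ) i₀)) =
       (fun ℓ : Fin m => decide (({y} : Finset I) ∈ BBset H (Bf ℓ) i₀))) ↔
      (∀ ℓ : Fin m, (({x} : Finset I) ∈ BBset H (Bf ℓ) i₀ ↔
        ({y} : Finset I) ∈ BBset H (Bf ℓ) i₀)) := by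
    intro x y
    rw [funext_iff]
    constructor
    · intro h ℓ; exact decide_eq_decide.mp (h ℓ)
    · intro h ℓ; exact decide_eq_decide.mpr (h ℓ)
  have fibC : ∀ i : I, KConnectedIn (H \ Cl H (⋃ ℓ : Fin m, Bf ℓ)) 1
      {J : Finset I | ∃ x : I, J = ({x} : Finset I) ∧
        (fun ℓ : Fin m => decide (({x} : Finset I) ∈ BBset H (Bf ℓ) i₀)) =
        (fun ℓ : Fin m => decide (({i} : Finset I) ∈ BBset H (Bf ℓ) i₀))} := by
    intro i J hJ K hK
    obtain ⟨x, rfl, hx⟩ := hJ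
    obtain ⟨y, rfl, hy⟩ := hK
    have hxy : (∀ ℓ : Fin m, (({x} : Finset I) ∈ BBset H (Bf ℓ) i₀ ↔
        ({y} : Finset I) ∈ BBset H (Bf ℓ) i₀)) := by
      rw [← hPhiEq, hx, hy]
    obtain ⟨w⟩ := (bridge x y).mpr hxy
    refine ⟨w.toList, w.isKPath_toList (fun z => hsingHm z), w.joins_toList, ?_⟩
    intro K hKmem
    obtain ⟨z, rfl, ⟨wz⟩⟩ := Walk.mem_toList_walk w K hKmem
    refine ⟨z, rfl, ?_⟩
    have hz := (bridge x z).mp ⟨wz⟩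
    have hzx := (hPhiEq z x).mpr (fun ℓ => (hz ℓ).symm)
    rw [hzx, hx]
  have fibLvl : ∀ i : I,
      {J : Finset I | ∃ x : I, J = ({x} : Finset I) ∧
        (fun ℓ : Fin m => decide (({x} : Finset I) ∈ BBset H (Bf ℓ) i₀)) =
        (fun ℓ : Fin m => decide (({i} : Finset I) ∈ BBset H (Bf ℓ) i₀))} ⊆
        level H 1 := by
    rintro i J ⟨x, rfl, -⟩
    exact hlvl1 x
  intro C
  constructor
  · rintro ⟨⟨J₀, hJ₀⟩, hCsub, hCconn, hCmax⟩
    obtain ⟨i, rfl⟩ := Finset.card_eq_one.mp (hCsub hJ₀).2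
    refine ⟨_, ⟨i, rfl⟩, ?_⟩
    have hCfib : C ⊆ {J : Finset I | ∃ x : I, J = ({x} : Finset I) ∧
        (fun ℓ : Fin m => decide (({x} : Finset I) ∈ BBset H (Bf ℓ) i₀)) =
        (fun ℓ : Fin m => decide (({i} : Finset I) ∈ BBset H (Bf ℓ) i₀))} := by
      intro J hJ
      obtain ⟨y, rfl⟩ := Finset.card_eq_one.mp (hCsub hJ).2
      obtain ⟨γ, hp, hj, -⟩ := hCconn _ hJ₀ _ hJ
      obtain ⟨w, -⟩ := Walk.exists_walk hp hj
      exact ⟨y, rfl, (hPhiEq y i).mpr (fun ℓ => ((bridge i y).mp ⟨w⟩ ℓ).symm)⟩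
    exact (hCmax _ hCfib (fibLvl i) (fibC i)).symm
  · rintro ⟨c, ⟨i, rfl⟩, rfl⟩
    refine ⟨⟨{i}, ⟨i, rfl, rfl⟩⟩, fibLvl i, fibC i, ?_⟩
    intro C' hsub hsub' hconn'
    refine Set.Subset.antisymm ?_ hsub
    intro J hJ
    obtain ⟨y, rfl⟩ := Finset.card_eq_one.mp (hsub' hJ).2
    obtain ⟨γ, hp, hj, -⟩ := hconn' _ (hsub ⟨i, rfl, rfl⟩) _ hJ
    obtain ⟨w, -⟩ := Walk.exists_walk hp hj
    exact ⟨y, rfl, (hPhiEq y i).mpr (fun ℓ => ((bridge i y).mp ⟨w⟩ ℓ).symm)⟩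

end MainDev

/-- For every `0 ≤ m ≤ n`, the 1-connected components of `H(1)` in
`H_m = H \ Cl_H(B₁ ∪ … ∪ B_m)` are exactly the fibers `Φ_m⁻¹(c)`, `c ∈ Δ_m`. -/
theorem components_are_fibers_of_PhiM
    {I : Type*} [Fintype I] [DecidableEq I] (H : Set (Finset I))
    (hH : IsCSS H) (hsc : SimplyConnected H)
    (D : NodalDatum H) (n : ℕ) (B : Fin n → Set (Finset I))
    (hblock : ∀ ℓ : Fin n, IsSepBlock D (B ℓ)) (hinj : Function.Injective B)
    (hsurj : ∀ C : Set (Finset I), IsSepBlock D C → ∃ ℓ : Fin n, C = B ℓ)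
    (i₀ : I) (m : ℕ) (hm : m ≤ n) :
    ∀ C : Set (Finset I),
      IsKComponent (H \ Cl H (⋃ ℓ : Fin m, B (Fin.castLE hm ℓ))) 1 (level H 1) C ↔
      ∃ c ∈ Set.range (PhiM H i₀ B m hm),
        C = {J : Finset I | ∃ i : I, J = ({i} : Finset I) ∧ PhiM H i₀ B m hm i = c} := by
  exact main_aux H hH hsc D (fun ℓ : Fin m => B (Fin.castLE hm ℓ)) (fun ℓ => hblock _) i₀
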